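/- Under the ATT(γ) marginals with γ ∈ [0,1/2], let H_i := min(1, ∑_{t=1}^T ∑_{f∈F_i} W_{f,t}) be the number of successful assignments involving offline agent i (equal to ∑_{t}∑_{f∈F_i} χ_{f,t}) and H := ∑_{i∈I} H_i the total number of successful assignments. Then each H_i is {0,1}-valued with E[H_i] ≤ γ, and Var[H] ≤ γ(1−γ)·|I|. (Theorem: variance analysis of ATT(γ); here |I| = B is the total matching capacity.) -/

import Mathlib

open MeasureTheory ProbabilityTheory Finset

private lemma tele_nat (γ : ℝ) (c : ℕ → ℝ) :
    ∀ n : ℕ, (∀ k, k < n → (1 - γ * ∑ s ∈ range k, c s) ≠ 0) →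
      ∏ k ∈ range n, (1 - γ * c k / (1 - γ * ∑ s ∈ range k, c s))
        = 1 - γ * ∑ k ∈ range n, c k := by
  intro n
  induction n with
  | zero => simp
  | succ n ih =>
    intro h
    rw [prod_range_succ, ih (fun k hk => h k (hk.trans (Nat.lt_succ_self n))),
      sum_range_succ]
    have hn := h n (Nat.lt_succ_self n)
    field_simp
    ring

private lemma prod_one_sub_add_le {ι : Type*} (s : Finset ι) (a b : ι → ℝ)
    (ha : ∀ i ∈ s, 0 ≤ a i) (hb : ∀ i ∈ s, 0 ≤ b i) (hab : ∀ i ∈ s, a i + b i ≤ 1) :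
    ∏ i ∈ s, (1 - (a i + b i)) ≤ (∏ i ∈ s, (1 - a i)) * ∏ i ∈ s, (1 - b i) := by
  rw [← prod_mul_distrib]
  apply prod_le_prod
  · intro i hi; linarith [hab i hi]
  · intro i hi; nlinarith [ha i hi, hb i hi, hab i hi]

theorem stmt_7 {Ω : Type*} [MeasureSpace Ω] [IsProbabilityMeasure (ℙ : Measure Ω)]
    {F I : Type*} [Fintype F] [Fintype I] [DecidableEq I]
    (ι : F → I) (T : ℕ)
    (W : Fin T → F → Ω → ℝ)
    (hW01 : ∀ t f ω, W t f ω = 0 ∨ W t f ω = 1)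
    (hWmeas : ∀ t f, Measurable (W t f))
    (hindep : iIndepFun
      (fun t ω => fun f => W t f ω) ℙ)
    (honce : ∀ᵐ ω ∂ℙ, ∀ t, ∑ f, W t f ω ≤ 1)
    (γ : ℝ) (hγ : γ ∈ Set.Icc (0 : ℝ) (1 / 2))
    (x p : F → Fin T → ℝ)
    (hx : ∀ f t, x f t ∈ Set.Icc (0 : ℝ) 1) (hp : ∀ f t, p f t ∈ Set.Icc (0 : ℝ) 1)
    (hcap : ∀ i, ∑ t, ∑ f ∈ univ.filter (fun f => ι f = i), x f t * p f t ≤ 1)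
    (β : I → Fin T → ℝ)
    (hβ : ∀ i t, β i t =
      1 - γ * ∑ s ∈ Finset.Iio t, ∑ f ∈ univ.filter (fun f => ι f = i), x f s * p f s)
    (hmarg : ∀ t f, ℙ {ω | W t f ω = 1} =
      ENNReal.ofReal (γ * x f t * p f t / β (ι f) t))
    (H : I → Ω → ℝ)
    (hH : ∀ i ω, H i ω = min 1 (∑ t, ∑ f ∈ univ.filter (fun f => ι f = i), W t f ω)) :
    (∀ i, (∀ ω, H i ω = 0 ∨ H i ω = 1) ∧ (∫ ω, H i ω) ≤ γ) ∧
    variance (fun ω => ∑ i, H i ω) ℙ ≤ γ * (1 - γ) * (Fintype.card I : ℝ) := by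
  classical
  obtain ⟨hγ0, hγ2⟩ := hγ
  -- basic positivity facts
  have hxp0 : ∀ (f : F) (t : Fin T), 0 ≤ x f t * p f t :=
    fun f t => mul_nonneg (hx f t).1 (hp f t).1
  set Fi : I → Finset F := fun i => univ.filter (fun f => ι f = i) with hFi
  set c : I → Fin T → ℝ := fun i t => ∑ f ∈ Fi i, x f t * p f t with hc
  have hc0 : ∀ i t, 0 ≤ c i t := fun i t => sum_nonneg fun f _ => hxp0 f t
  have hcsum : ∀ i, ∑ t, c i t ≤ 1 := hcap
  have hβ_eq : ∀ i t, β i t = 1 - γ * ∑ s ∈ Finset.Iio t, c i s := hβ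
  have hβ_ge : ∀ i t, 1 - γ ≤ β i t := by
    intro i t
    rw [hβ_eq]
    have h1 : ∑ s ∈ Finset.Iio t, c i s ≤ ∑ s, c i s :=
      Finset.sum_le_sum_of_subset_of_nonneg (subset_univ _) (fun s _ _ => hc0 i s)
    have h2 : γ * ∑ s ∈ Finset.Iio t, c i s ≤ γ * 1 :=
      mul_le_mul_of_nonneg_left (h1.trans (hcsum i)) hγ0
    linarith
  have hβpos : ∀ i t, 0 < β i t := fun i t => lt_of_lt_of_le (by linarith) (hβ_ge i t)
  have hr0 : ∀ (f : F) (t : Fin T), 0 ≤ γ * x f t * p f t / β (ι f) t :=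
    fun f t => div_nonneg (by nlinarith [hxp0 f t, (hx f t).1, (hp f t).1]) (hβpos (ι f) t).le
  have hterm0 : ∀ (t : Fin T) (f : F) (ω : Ω), 0 ≤ W t f ω := by
    intro t f ω; rcases hW01 t f ω with h | h <;> rw [h]; norm_num
  -- a.e. disjointness of success events within a round
  have honce' : ℙ {ω | ¬ ∀ t, ∑ f, W t f ω ≤ 1} = 0 := ae_iff.mp honce
  have hdisj : ∀ (t : Fin T) (f g : F), f ≠ g →
      AEDisjoint ℙ {ω | W t f ω = 1} {ω | W t g ω = 1} := by
    intro t f g hfg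
    refine measure_mono_null ?_ honce'
    intro ω hω
    simp only [Set.mem_inter_iff, Set.mem_setOf_eq] at hω ⊢
    intro hall
    have h1 := hall t
    have hsub : W t f ω + W t g ω ≤ ∑ f', W t f' ω := by
      have : ∑ f' ∈ ({f, g} : Finset F), W t f' ω ≤ ∑ f', W t f' ω :=
        Finset.sum_le_sum_of_subset_of_nonneg (subset_univ _) (fun f' _ _ => hterm0 t f' ω)
      rwa [Finset.sum_pair hfg] at this
    rw [hω.1, hω.2] at hsub
    linarith
  have hWset : ∀ (t : Fin T) (f : F), MeasurableSet {ω | W t f ω = 1} :=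
    fun t f => hWmeas t f (measurableSet_singleton 1)
  -- the "no success" events
  set N : Finset F → Fin T → Set Ω := fun G t => ⋂ f ∈ G, {ω | W t f ω = 0} with hN
  have hNmeas : ∀ (G : Finset F) (t : Fin T), MeasurableSet (N G t) := fun G t =>
    MeasurableSet.biInter (G : Set F).to_countable
      (fun f _ => hWmeas t f (measurableSet_singleton 0))
  have hNcompl : ∀ (G : Finset F) (t : Fin T),
      N G t = (⋃ f ∈ G, {ω | W t f ω = 1})ᶜ := by
    intro G t
    ext ω
    simp only [hN, Set.mem_iInter, Set.mem_setOf_eq, Set.mem_compl_iff, Set.mem_iUnion,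
      not_exists]
    constructor
    · intro h f hf h1
      rw [h f hf] at h1; norm_num at h1
    · intro h f hf
      rcases hW01 t f ω with h0 | h1
      · exact h0
      · exact absurd h1 (h f hf)
  have hNprob : ∀ (G : Finset F) (t : Fin T),
      (∑ f ∈ G, γ * x f t * p f t / β (ι f) t) ≤ 1 ∧
      (ℙ (N G t)).toReal = 1 - ∑ f ∈ G, γ * x f t * p f t / β (ι f) t := by
    intro G t
    have hU : ℙ (⋃ f ∈ G, {ω | W t f ω = 1}) =
        ENNReal.ofReal (∑ f ∈ G, γ * x f t * p f t / β (ι f) t) := by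
      rw [measure_biUnion_finset₀ (fun f _ g hg hfg => hdisj t f g hfg)
        (fun f _ => (hWset t f).nullMeasurableSet),
        ENNReal.ofReal_sum_of_nonneg (fun f _ => hr0 f t)]
      exact Finset.sum_congr rfl fun f _ => hmarg t f
    have hle : (∑ f ∈ G, γ * x f t * p f t / β (ι f) t) ≤ 1 := by
      have := prob_le_one (μ := (ℙ : Measure Ω)) (s := ⋃ f ∈ G, {ω | W t f ω = 1})
      rw [hU] at this
      exact ENNReal.ofReal_le_one.mp this
    refine ⟨hle, ?_⟩
    rw [hNcompl, prob_compl_eq_one_sub (Finset.measurableSet_biUnion G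
      (fun f _ => hWset t f)), hU,
      ENNReal.toReal_sub_of_le (by rwa [ENNReal.ofReal_le_one]) ENNReal.one_ne_top,
      ENNReal.toReal_one, ENNReal.toReal_ofReal (sum_nonneg fun f _ => hr0 f t)]
  -- independence across rounds
  have hNinter : ∀ G : Finset F,
      (ℙ (⋂ t, N G t)).toReal = ∏ t, (ℙ (N G t)).toReal := by
    intro G
    rw [hindep.meas_iInter (fun t => ?_), ENNReal.toReal_prod]
    refine ⟨{v : F → ℝ | ∀ f ∈ G, v f = 0}, ?_, ?_⟩
    · have : {v : F → ℝ | ∀ f ∈ G, v f = 0} = ⋂ f ∈ G, (fun v : F → ℝ => v f) ⁻¹' {0} := by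
        ext v; simp
      rw [this]
      exact MeasurableSet.biInter (G : Set F).to_countable
        (fun f _ => (measurable_pi_apply f) (measurableSet_singleton 0))
    · ext ω
      simp [hN]
  have hH' : ∀ (i : I) (ω : Ω), H i ω = min 1 (∑ t, ∑ f ∈ Fi i, W t f ω) := hH
  -- per-round success probability in terms of c
  have hq_eq : ∀ (i : I) (t : Fin T),
      ∑ f ∈ Fi i, γ * x f t * p f t / β (ι f) t = γ * c i t / β i t := by
    intro i t
    have h1 : ∀ f ∈ Fi i, γ * x f t * p f t / β (ι f) t
        = γ * (x f t * p f t) / β i t := by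
      intro f hf
      rw [(mem_filter.mp hf).2, mul_assoc]
    rw [Finset.sum_congr rfl h1, ← Finset.sum_div, ← Finset.mul_sum, hc]
  -- the telescoping product identity
  have hprod : ∀ i : I, ∏ t, (1 - γ * c i t / β i t) = 1 - γ * ∑ t, c i t := by
    intro i
    set c' : ℕ → ℝ := fun k => if h : k < T then c i ⟨k, h⟩ else 0 with hc'
    have hceq : ∀ t : Fin T, c' t.val = c i t := by
      intro t; simp [hc', t.isLt]
    have hIio : ∀ t : Fin T, ∑ s ∈ Finset.Iio t, c i s = ∑ k ∈ range t.val, c' k := by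
      intro t
      calc ∑ s ∈ Finset.Iio t, c i s = ∑ s ∈ Finset.Iio t, c' s.val :=
            Finset.sum_congr rfl fun s _ => (hceq s).symm
        _ = ∑ k ∈ Finset.Iio (t : ℕ), c' k := by
            rw [← Fin.map_valEmbedding_Iio, Finset.sum_map]; rfl
        _ = ∑ k ∈ range (t : ℕ), c' k := by rw [Nat.Iio_eq_range]
    have hβ' : ∀ t : Fin T, β i t = 1 - γ * ∑ k ∈ range t.val, c' k := by
      intro t; rw [hβ_eq, hIio]
    have hne : ∀ k, k < T → (1 - γ * ∑ s ∈ range k, c' s) ≠ 0 := by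
      intro k hk
      have h2 := hβpos i ⟨k, hk⟩
      rw [hβ' ⟨k, hk⟩] at h2
      exact h2.ne'
    have htel := tele_nat γ c' T hne
    have hL : ∏ t : Fin T, (1 - γ * c i t / β i t)
        = ∏ k ∈ range T, (1 - γ * c' k / (1 - γ * ∑ s ∈ range k, c' s)) := by
      rw [← Fin.prod_univ_eq_prod_range
        (fun k => 1 - γ * c' k / (1 - γ * ∑ s ∈ range k, c' s)) T]
      refine Finset.prod_congr rfl fun t _ => ?_
      rw [hceq t, ← hβ' t]
    have hR : ∑ t : Fin T, c i t = ∑ k ∈ range T, c' k := by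
      rw [← Fin.sum_univ_eq_sum_range c' T]
      exact Finset.sum_congr rfl fun t _ => (hceq t).symm
    rw [hL, htel, hR]
  -- the probability that agent i is never matched
  have hp0 : ∀ i, (ℙ (⋂ t, N (Fi i) t)).toReal = 1 - γ * ∑ t, c i t := by
    intro i
    rw [hNinter]
    have hstep : ∀ t : Fin T, (ℙ (N (Fi i) t)).toReal = 1 - γ * c i t / β i t := by
      intro t; rw [(hNprob (Fi i) t).2, hq_eq]
    rw [Finset.prod_congr rfl fun t _ => hstep t, hprod]
  have hBmeas : ∀ i, MeasurableSet (⋂ t, N (Fi i) t) :=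
    fun i => MeasurableSet.iInter fun t => hNmeas _ t
  have hmemN : ∀ (i : I) (ω : Ω),
      ω ∈ (⋂ t, N (Fi i) t) ↔ ∀ t, ∀ f ∈ Fi i, W t f ω = 0 := by
    intro i ω
    simp [hN]
  -- H i is the indicator of "agent i matched at least once"
  have hHcases : ∀ i ω, (ω ∈ (⋂ t, N (Fi i) t) ∧ H i ω = 0)
      ∨ (ω ∉ (⋂ t, N (Fi i) t) ∧ H i ω = 1) := by
    intro i ω
    by_cases hmem : ω ∈ ⋂ t, N (Fi i) t
    · left
      refine ⟨hmem, ?_⟩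
      have h0 : ∑ t, ∑ f ∈ Fi i, W t f ω = 0 :=
        Finset.sum_eq_zero fun t _ =>
          Finset.sum_eq_zero fun f hf => (hmemN i ω).mp hmem t f hf
      rw [hH' i ω, h0]
      norm_num
    · right
      refine ⟨hmem, ?_⟩
      rw [hmemN i ω] at hmem
      push_neg at hmem
      obtain ⟨t, f, hf, hW⟩ := hmem
      have hW1 : W t f ω = 1 := (hW01 t f ω).resolve_left hW
      have h1 : (1 : ℝ) ≤ ∑ f' ∈ Fi i, W t f' ω := by
        have h2 := Finset.single_le_sum (f := fun f' => W t f' ω)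
          (fun f' _ => hterm0 t f' ω) hf
        simpa [hW1] using h2
      have h2 : ∑ f' ∈ Fi i, W t f' ω ≤ ∑ t', ∑ f' ∈ Fi i, W t' f' ω :=
        Finset.single_le_sum (f := fun t' => ∑ f' ∈ Fi i, W t' f' ω)
          (fun t' _ => sum_nonneg fun f' _ => hterm0 t' f' ω) (mem_univ t)
      rw [hH' i ω]
      exact min_eq_left (by linarith)
  have hH01 : ∀ i ω, H i ω = 0 ∨ H i ω = 1 := by
    intro i ω
    rcases hHcases i ω with ⟨_, h⟩ | ⟨_, h⟩
    exacts [Or.inl h, Or.inr h]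
  have hHind : ∀ i, (fun ω => H i ω)
      = Set.indicator (⋂ t, N (Fi i) t)ᶜ (fun _ => (1 : ℝ)) := by
    intro i
    funext ω
    rcases hHcases i ω with ⟨hm, h0⟩ | ⟨hm, h1⟩
    · rw [h0, Set.indicator_of_notMem (by simpa using hm)]
    · rw [h1, Set.indicator_of_mem (by simpa using hm)]
  -- expectation of H i
  have hμ : ∀ i, (∫ ω, H i ω) = γ * ∑ t, c i t := by
    intro i
    have h1 : (∫ ω, H i ω) = (ℙ (⋂ t, N (Fi i) t)ᶜ).toReal := by
      rw [hHind i]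
      exact (integral_indicator_one (hBmeas i).compl).trans (measureReal_def _ _)
    rw [h1, prob_compl_eq_one_sub (hBmeas i),
      ENNReal.toReal_sub_of_le prob_le_one ENNReal.one_ne_top,
      ENNReal.toReal_one, hp0 i]
    ring
  have hμ0 : ∀ i, 0 ≤ γ * ∑ t, c i t :=
    fun i => mul_nonneg hγ0 (sum_nonneg fun t _ => hc0 i t)
  have hμγ : ∀ i, γ * ∑ t, c i t ≤ γ := by
    intro i
    calc γ * ∑ t, c i t ≤ γ * 1 := mul_le_mul_of_nonneg_left (hcsum i) hγ0
      _ = γ := mul_one γ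
  -- covariance bound for distinct agents
  have hpair : ∀ i j, i ≠ j →
      (ℙ ((⋂ t, N (Fi i) t)ᶜ ∩ (⋂ t, N (Fi j) t)ᶜ)).toReal
        ≤ (γ * ∑ t, c i t) * (γ * ∑ t, c j t) := by
    intro i j hij
    have hFidisj : Disjoint (Fi i) (Fi j) := by
      rw [Finset.disjoint_left]
      intro f hfi hfj
      rw [hFi, mem_filter] at hfi hfj
      exact hij (hfi.2 ▸ hfj.2 ▸ rfl)
    have hBint : (⋂ t, N (Fi i) t) ∩ (⋂ t, N (Fi j) t) = ⋂ t, N (Fi i ∪ Fi j) t := by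
      ext ω
      simp only [hN, Set.mem_inter_iff, Set.mem_iInter, Set.mem_setOf_eq, Finset.mem_union]
      constructor
      · rintro ⟨h1, h2⟩ t f hf
        rcases hf with hf | hf
        exacts [h1 t f hf, h2 t f hf]
      · intro h
        exact ⟨fun t f hf => h t f (Or.inl hf), fun t f hf => h t f (Or.inr hf)⟩
    have hq0 : ∀ (k : I) (t : Fin T), 0 ≤ γ * c k t / β k t := by
      intro k t
      exact div_nonneg (mul_nonneg hγ0 (hc0 k t)) (hβpos k t).le
    have hP00 : (ℙ ((⋂ t, N (Fi i) t) ∩ (⋂ t, N (Fi j) t))).toReal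
        ≤ (1 - γ * ∑ t, c i t) * (1 - γ * ∑ t, c j t) := by
      rw [hBint, hNinter]
      have hterm : ∀ t : Fin T, (ℙ (N (Fi i ∪ Fi j) t)).toReal
          = 1 - (γ * c i t / β i t + γ * c j t / β j t) := by
        intro t
        rw [(hNprob _ t).2, Finset.sum_union hFidisj, hq_eq, hq_eq]
      have hab1 : ∀ t : Fin T, γ * c i t / β i t + γ * c j t / β j t ≤ 1 := by
        intro t
        have h2 := (hNprob (Fi i ∪ Fi j) t).1
        rwa [Finset.sum_union hFidisj, hq_eq, hq_eq] at h2
      rw [Finset.prod_congr rfl fun t _ => hterm t]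
      calc ∏ t, (1 - (γ * c i t / β i t + γ * c j t / β j t))
          ≤ (∏ t, (1 - γ * c i t / β i t)) * ∏ t, (1 - γ * c j t / β j t) :=
            prod_one_sub_add_le univ _ _ (fun t _ => hq0 i t) (fun t _ => hq0 j t)
              (fun t _ => hab1 t)
        _ = (1 - γ * ∑ t, c i t) * (1 - γ * ∑ t, c j t) := by rw [hprod, hprod]
    -- inclusion-exclusion
    have hIE := measure_union_add_inter (μ := (ℙ : Measure Ω))
      (⋂ t, N (Fi i) t) (hBmeas j)
    have hne1 : ∀ s : Set Ω, ℙ s ≠ ⊤ := fun s => measure_ne_top ℙ s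
    have hIE' : (ℙ ((⋂ t, N (Fi i) t) ∪ ⋂ t, N (Fi j) t)).toReal
        + (ℙ ((⋂ t, N (Fi i) t) ∩ ⋂ t, N (Fi j) t)).toReal
        = (ℙ (⋂ t, N (Fi i) t)).toReal + (ℙ (⋂ t, N (Fi j) t)).toReal := by
      rw [← ENNReal.toReal_add (hne1 _) (hne1 _), ← ENNReal.toReal_add (hne1 _) (hne1 _), hIE]
    have hcompl : (⋂ t, N (Fi i) t)ᶜ ∩ (⋂ t, N (Fi j) t)ᶜ
        = ((⋂ t, N (Fi i) t) ∪ ⋂ t, N (Fi j) t)ᶜ := by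
      rw [Set.compl_union]
    have hU1 : (ℙ (((⋂ t, N (Fi i) t) ∪ ⋂ t, N (Fi j) t)ᶜ)).toReal
        = 1 - (ℙ ((⋂ t, N (Fi i) t) ∪ ⋂ t, N (Fi j) t)).toReal := by
      rw [prob_compl_eq_one_sub ((hBmeas i).union (hBmeas j)),
        ENNReal.toReal_sub_of_le prob_le_one ENNReal.one_ne_top, ENNReal.toReal_one]
    rw [hcompl, hU1]
    have hpi := hp0 i
    have hpj := hp0 j
    nlinarith [hP00, hIE', hμ0 i, hμ0 j]
  -- product of indicators
  have hprodind : ∀ i j, (fun ω => H i ω * H j ω)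
      = Set.indicator ((⋂ t, N (Fi i) t)ᶜ ∩ (⋂ t, N (Fi j) t)ᶜ) (fun _ => (1 : ℝ)) := by
    intro i j
    funext ω
    have hmem : ω ∈ ((⋂ t, N (Fi i) t)ᶜ ∩ (⋂ t, N (Fi j) t)ᶜ) ↔
        (ω ∉ ⋂ t, N (Fi i) t) ∧ (ω ∉ ⋂ t, N (Fi j) t) := Iff.rfl
    rcases hHcases i ω with ⟨hmi, hi⟩ | ⟨hmi, hi⟩ <;>
      rcases hHcases j ω with ⟨hmj, hj⟩ | ⟨hmj, hj⟩
    · rw [hi, hj, Set.indicator_of_notMem (fun h => (hmem.mp h).1 hmi)]; ring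
    · rw [hi, hj, Set.indicator_of_notMem (fun h => (hmem.mp h).1 hmi)]; ring
    · rw [hi, hj, Set.indicator_of_notMem (fun h => (hmem.mp h).2 hmj)]; ring
    · rw [hi, hj, Set.indicator_of_mem (hmem.mpr ⟨hmi, hmj⟩)]; ring
  have hmints : ∀ i j, MeasurableSet ((⋂ t, N (Fi i) t)ᶜ ∩ (⋂ t, N (Fi j) t)ᶜ) :=
    fun i j => (hBmeas i).compl.inter (hBmeas j).compl
  have hmval : ∀ i j, (∫ ω, H i ω * H j ω)
      = (ℙ ((⋂ t, N (Fi i) t)ᶜ ∩ (⋂ t, N (Fi j) t)ᶜ)).toReal := by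
    intro i j
    rw [hprodind i j]
    exact (integral_indicator_one (hmints i j)).trans (measureReal_def _ _)
  have hdiag : ∀ i, (∫ ω, H i ω * H i ω) = γ * ∑ t, c i t := by
    intro i
    have h1 : (fun ω => H i ω * H i ω) = fun ω => H i ω := by
      funext ω
      rcases hH01 i ω with h | h <;> rw [h] <;> ring
    calc (∫ ω, H i ω * H i ω) = ∫ ω, H i ω := by rw [h1]
      _ = γ * ∑ t, c i t := hμ i
  -- measurability and integrability
  have hHmeas : ∀ i, Measurable (H i) := by
    intro i
    have h1 : H i = fun ω => min 1 (∑ t, ∑ f ∈ Fi i, W t f ω) := funext (hH' i)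
    rw [h1]
    exact measurable_const.min
      (Finset.measurable_sum _ fun t _ => Finset.measurable_sum _ fun f _ => hWmeas t f)
  have hHbd : ∀ i ω, |H i ω| ≤ 1 := by
    intro i ω
    rcases hH01 i ω with h | h <;> rw [h] <;> norm_num
  have hint : ∀ i j, Integrable (fun ω => H i ω * H j ω) := by
    intro i j
    refine memLp_one_iff_integrable.mp ?_
    refine MemLp.of_bound (((hHmeas i).mul (hHmeas j)).aestronglyMeasurable) 1 ?_
    filter_upwards with ω
    rw [Real.norm_eq_abs, abs_mul]
    exact mul_le_one₀ (hHbd i ω) (abs_nonneg _) (hHbd j ω)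
  have hintH : ∀ i, Integrable (H i) := by
    intro i
    refine memLp_one_iff_integrable.mp ?_
    refine MemLp.of_bound (hHmeas i).aestronglyMeasurable 1 ?_
    filter_upwards with ω
    rw [Real.norm_eq_abs]
    exact hHbd i ω
  refine ⟨fun i => ⟨hH01 i, by rw [hμ i]; exact hμγ i⟩, ?_⟩
  -- variance bound
  have hXmeas : Measurable (fun ω => ∑ i, H i ω) :=
    Finset.measurable_sum _ fun i _ => hHmeas i
  have hXbd : ∀ ω, ‖∑ i, H i ω‖ ≤ (Fintype.card I : ℝ) := by
    intro ω
    rw [Real.norm_eq_abs]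
    calc |∑ i, H i ω| ≤ ∑ i, |H i ω| := Finset.abs_sum_le_sum_abs _ _
      _ ≤ ∑ _i : I, (1 : ℝ) := Finset.sum_le_sum fun i _ => hHbd i ω
      _ = (Fintype.card I : ℝ) := by simp [Finset.card_univ]
  have hX2 : MemLp (fun ω => ∑ i, H i ω) 2 ℙ :=
    MemLp.of_bound hXmeas.aestronglyMeasurable _ (Filter.Eventually.of_forall hXbd)
  rw [variance_eq_sub hX2]
  have hEX : (∫ ω, ∑ i, H i ω) = ∑ i, γ * ∑ t, c i t := by
    rw [integral_finset_sum univ fun i _ => hintH i]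
    exact Finset.sum_congr rfl fun i _ => hμ i
  have hEX2 : (∫ ω, (∑ i, H i ω) ^ 2) = ∑ i, ∑ j, ∫ ω, H i ω * H j ω := by
    have h1 : ∀ ω : Ω, (∑ i, H i ω) ^ 2 = ∑ i, ∑ j, H i ω * H j ω := by
      intro ω
      rw [sq, Finset.sum_mul_sum]
    calc (∫ ω, (∑ i, H i ω) ^ 2) = ∫ ω, ∑ i, ∑ j, H i ω * H j ω := by
          simp only [h1]
      _ = ∑ i, ∑ j, ∫ ω, H i ω * H j ω := by
          rw [integral_finset_sum univ fun i _ =>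
            integrable_finset_sum univ fun j _ => hint i j]
          exact Finset.sum_congr rfl fun i _ =>
            integral_finset_sum univ fun j _ => hint i j
  have hfun2 : ((fun ω => ∑ i, H i ω) ^ 2) = fun ω => (∑ i, H i ω) ^ 2 := by
    funext ω; simp [Pi.pow_apply]
  rw [hfun2]
  rw [hEX2, hEX]
  -- expand the square of the sum of means
  rw [sq, Finset.sum_mul_sum]
  rw [← Finset.sum_sub_distrib]
  have hkey : ∀ i : I,
      (∑ j, ∫ ω, H i ω * H j ω) - ∑ j, (γ * ∑ t, c i t) * (γ * ∑ t, c j t)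
        ≤ γ * (1 - γ) := by
    intro i
    rw [← Finset.sum_sub_distrib]
    have hsplit := Finset.sum_eq_sum_sdiff_singleton_add (mem_univ i)
      (fun j => (∫ ω, H i ω * H j ω) - (γ * ∑ t, c i t) * (γ * ∑ t, c j t))
    rw [hsplit]
    have hoff : ∑ j ∈ univ \ {i},
        ((∫ ω, H i ω * H j ω) - (γ * ∑ t, c i t) * (γ * ∑ t, c j t)) ≤ 0 := by
      refine Finset.sum_nonpos fun j hj => ?_
      have hij : i ≠ j := by
        rw [Finset.mem_sdiff, Finset.mem_singleton] at hj
        exact fun h => hj.2 h.symm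
      have h2 := hpair i j hij
      rw [hmval i j]
      linarith
    have hdiag' : (∫ ω, H i ω * H i ω) - (γ * ∑ t, c i t) * (γ * ∑ t, c i t)
        ≤ γ * (1 - γ) := by
      rw [hdiag i]
      nlinarith [hμ0 i, hμγ i]
    linarith
  calc ∑ i, ((∑ j, ∫ ω, H i ω * H j ω) - ∑ j, (γ * ∑ t, c i t) * (γ * ∑ t, c j t))
      ≤ ∑ _i : I, γ * (1 - γ) := Finset.sum_le_sum fun i _ => hkey i
    _ = γ * (1 - γ) * (Fintype.card I : ℝ) := by
        rw [Finset.sum_const, Finset.card_univ, nsmul_eq_mul]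
        ring
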